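/- Let D and B be Hopf algebras over a field F (i.e. Hopf coquasigroups whose coproducts are coassociative) and let Ω : D⊗B → B⊗D be a linear map satisfying (δ_B⊗D)∘Ω = (B⊗Ω)∘(Ω⊗B)∘(D⊗δ_B), (B⊗δ_D)∘Ω = (Ω⊗D)∘(D⊗Ω)∘(δ_D⊗B), (ε_B⊗D)∘Ω = D⊗ε_B and (B⊗ε_D)∘Ω = ε_D⊗B (a codistributive law between the underlying comonoids). Then the four a-monoidal identities hold: (D⊗B⊗(μ_D∘(D⊗λ_D)))∘(D⊗Ω⊗D)∘(δ_D⊗Ω)∘(δ_D⊗B) = D⊗B⊗η_D; (D⊗B⊗(μ_D∘(λ_D⊗D)))∘(D⊗Ω⊗D)∘(δ_D⊗Ω)∘(δ_D⊗B) = D⊗B⊗η_D; ((μ_B∘(B⊗λ_B))⊗D⊗B)∘(B⊗Ω⊗B)∘(Ω⊗δ_B)∘(D⊗δ_B) = η_B⊗D⊗B; and ((μ_B∘(λ_B⊗B))⊗D⊗B)∘(B⊗Ω⊗B)∘(Ω⊗δ_B)∘(D⊗δ_B) = η_B⊗D⊗B. -/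

import Mathlib

open TensorProduct LinearMap

noncomputable section

universe u

/-- A Hopf quasigroup structure on an `F`-module `H`. -/
structure HopfQG (F : Type u) [Field F] (H : Type u) [AddCommGroup H] [Module F H] where
  eta : F →ₗ[F] H
  mu : H ⊗[F] H →ₗ[F] H
  eps : H →ₗ[F] F
  delta : H →ₗ[F] H ⊗[F] H
  lam : H →ₗ[F] H
  mul_one : mu ∘ₗ lTensor H eta ∘ₗ (TensorProduct.rid F H).symm.toLinearMap = LinearMap.id
  one_mul : mu ∘ₗ rTensor H eta ∘ₗ (TensorProduct.lid F H).symm.toLinearMap = LinearMap.id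
  counit_left : (TensorProduct.lid F H).toLinearMap ∘ₗ rTensor H eps ∘ₗ delta = LinearMap.id
  counit_right : (TensorProduct.rid F H).toLinearMap ∘ₗ lTensor H eps ∘ₗ delta = LinearMap.id
  coassoc : (TensorProduct.assoc F H H H).toLinearMap ∘ₗ rTensor H delta ∘ₗ delta
      = lTensor H delta ∘ₗ delta
  eps_eta : eps ∘ₗ eta = LinearMap.id
  eps_mu : eps ∘ₗ mu = (TensorProduct.lid F F).toLinearMap ∘ₗ TensorProduct.map eps eps
  delta_eta : delta ∘ₗ eta
      = TensorProduct.map eta eta ∘ₗ (TensorProduct.lid F F).symm.toLinearMap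
  delta_mu : delta ∘ₗ mu
      = TensorProduct.map mu mu ∘ₗ (TensorProduct.tensorTensorTensorComm F H H H H).toLinearMap
          ∘ₗ TensorProduct.map delta delta
  antipode_l1 : mu ∘ₗ TensorProduct.map lam mu ∘ₗ (TensorProduct.assoc F H H H).toLinearMap
        ∘ₗ rTensor H delta
      = (TensorProduct.lid F H).toLinearMap ∘ₗ rTensor H eps
  antipode_l2 : mu ∘ₗ lTensor H mu ∘ₗ lTensor H (rTensor H lam)
        ∘ₗ (TensorProduct.assoc F H H H).toLinearMap ∘ₗ rTensor H delta
      = (TensorProduct.lid F H).toLinearMap ∘ₗ rTensor H eps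
  antipode_r1 : mu ∘ₗ rTensor H mu ∘ₗ (TensorProduct.assoc F H H H).symm.toLinearMap
        ∘ₗ lTensor H (rTensor H lam) ∘ₗ lTensor H delta
      = (TensorProduct.rid F H).toLinearMap ∘ₗ lTensor H eps
  antipode_r2 : mu ∘ₗ TensorProduct.map mu lam ∘ₗ (TensorProduct.assoc F H H H).symm.toLinearMap
        ∘ₗ lTensor H delta
      = (TensorProduct.rid F H).toLinearMap ∘ₗ lTensor H eps

section QGDefs

variable (F : Type u) [Field F]
variable {H : Type u} [AddCommGroup H] [Module F H]
variable {A : Type u} [AddCommGroup A] [Module F A]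
variable {X : Type u} [AddCommGroup X] [Module F X]

/-- The tensor-product coproduct `δ_{H⊗A} = (H⊗c_{H,A}⊗A)∘(δ_H⊗δ_A)`. -/
def tensorDelta (dH : H →ₗ[F] H ⊗[F] H) (dA : A →ₗ[F] A ⊗[F] A) :
    H ⊗[F] A →ₗ[F] (H ⊗[F] A) ⊗[F] (H ⊗[F] A) :=
  (TensorProduct.tensorTensorTensorComm F H H A A).toLinearMap ∘ₗ TensorProduct.map dH dA

/-- The tensor-product counit `ε_H⊗ε_A`. -/
def tensorEps (eH : H →ₗ[F] F) (eA : A →ₗ[F] F) : H ⊗[F] A →ₗ[F] F :=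
  (TensorProduct.lid F F).toLinearMap ∘ₗ TensorProduct.map eH eA

/-- The tensor-product unit `η_H⊗η_A`. -/
def tensorEta (uH : F →ₗ[F] H) (uA : F →ₗ[F] A) : F →ₗ[F] H ⊗[F] A :=
  TensorProduct.map uH uA ∘ₗ (TensorProduct.lid F F).symm.toLinearMap

/-- The tensor-product multiplication `(μ_H⊗μ_A)∘(H⊗c_{A,H}⊗A)`. -/
def tensorMu (mH : H ⊗[F] H →ₗ[F] H) (mA : A ⊗[F] A →ₗ[F] A) :
    (H ⊗[F] A) ⊗[F] (H ⊗[F] A) →ₗ[F] H ⊗[F] A :=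
  TensorProduct.map mH mA ∘ₗ (TensorProduct.tensorTensorTensorComm F H A H A).toLinearMap

/-- `Ψ : H⊗A → A⊗H` is a distributive law of the Hopf quasigroup `H` over `A`. -/
def IsDistLaw (QH : HopfQG F H) (QA : HopfQG F A) (Ψ : H ⊗[F] A →ₗ[F] A ⊗[F] H) : Prop :=
  (Ψ ∘ₗ lTensor H QA.mu ∘ₗ TensorProduct.map QH.lam (rTensor A QA.lam)
      = rTensor H QA.mu ∘ₗ (TensorProduct.assoc F A A H).symm.toLinearMap
        ∘ₗ lTensor A Ψ ∘ₗ (TensorProduct.assoc F A H A).toLinearMap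
        ∘ₗ rTensor A Ψ ∘ₗ (TensorProduct.assoc F H A A).symm.toLinearMap
        ∘ₗ TensorProduct.map QH.lam (rTensor A QA.lam))
  ∧ (Ψ ∘ₗ rTensor A QH.mu ∘ₗ TensorProduct.map (lTensor H QH.lam) QA.lam
      = lTensor A QH.mu ∘ₗ (TensorProduct.assoc F A H H).toLinearMap
        ∘ₗ rTensor H Ψ ∘ₗ (TensorProduct.assoc F H A H).symm.toLinearMap
        ∘ₗ lTensor H Ψ ∘ₗ (TensorProduct.assoc F H H A).toLinearMap
        ∘ₗ TensorProduct.map (lTensor H QH.lam) QA.lam)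
  ∧ (Ψ ∘ₗ lTensor H QA.eta ∘ₗ (TensorProduct.rid F H).symm.toLinearMap
      = rTensor H QA.eta ∘ₗ (TensorProduct.lid F H).symm.toLinearMap)
  ∧ (Ψ ∘ₗ rTensor A QH.eta ∘ₗ (TensorProduct.lid F A).symm.toLinearMap
      = lTensor A QH.eta ∘ₗ (TensorProduct.rid F A).symm.toLinearMap)

/-- `Ψ` is a comonoidal distributive law of `H` over `A`. -/
def IsComonoidalDL (QH : HopfQG F H) (QA : HopfQG F A) (Ψ : H ⊗[F] A →ₗ[F] A ⊗[F] H) : Prop :=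
  IsDistLaw F QH QA Ψ
  ∧ (tensorDelta F QA.delta QH.delta ∘ₗ Ψ
      = TensorProduct.map Ψ Ψ ∘ₗ tensorDelta F QH.delta QA.delta)
  ∧ (tensorEps F QA.eps QH.eps ∘ₗ Ψ = tensorEps F QH.eps QA.eps)

/-- `Ψ` is an a-comonoidal distributive law of `H` over `A`. -/
def IsAComonoidalDL (QH : HopfQG F H) (QA : HopfQG F A) (Ψ : H ⊗[F] A →ₗ[F] A ⊗[F] H) : Prop :=
  IsComonoidalDL F QH QA Ψ
  ∧ (lTensor A QH.mu ∘ₗ (TensorProduct.assoc F A H H).toLinearMap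
        ∘ₗ TensorProduct.map Ψ QH.mu
        ∘ₗ (TensorProduct.assoc F H A (H ⊗[F] H)).symm.toLinearMap
        ∘ₗ lTensor H (TensorProduct.assoc F A H H).toLinearMap
        ∘ₗ lTensor H (rTensor H Ψ)
        ∘ₗ lTensor H (TensorProduct.assoc F H A H).symm.toLinearMap
        ∘ₗ (TensorProduct.assoc F H H (A ⊗[F] H)).toLinearMap
        ∘ₗ rTensor (A ⊗[F] H) (rTensor H QH.lam ∘ₗ QH.delta)
      = (TensorProduct.lid F (A ⊗[F] H)).toLinearMap ∘ₗ rTensor (A ⊗[F] H) QH.eps)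
  ∧ (lTensor A QH.mu ∘ₗ (TensorProduct.assoc F A H H).toLinearMap
        ∘ₗ TensorProduct.map Ψ QH.mu
        ∘ₗ (TensorProduct.assoc F H A (H ⊗[F] H)).symm.toLinearMap
        ∘ₗ lTensor H (TensorProduct.assoc F A H H).toLinearMap
        ∘ₗ lTensor H (rTensor H Ψ)
        ∘ₗ lTensor H (TensorProduct.assoc F H A H).symm.toLinearMap
        ∘ₗ (TensorProduct.assoc F H H (A ⊗[F] H)).toLinearMap
        ∘ₗ rTensor (A ⊗[F] H) (lTensor H QH.lam ∘ₗ QH.delta)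
      = (TensorProduct.lid F (A ⊗[F] H)).toLinearMap ∘ₗ rTensor (A ⊗[F] H) QH.eps)
  ∧ (rTensor H QA.mu ∘ₗ (TensorProduct.assoc F A A H).symm.toLinearMap
        ∘ₗ TensorProduct.map QA.mu Ψ
        ∘ₗ (TensorProduct.assoc F A A (H ⊗[F] A)).symm.toLinearMap
        ∘ₗ lTensor A (TensorProduct.assoc F A H A).toLinearMap
        ∘ₗ lTensor A (rTensor A Ψ)
        ∘ₗ lTensor A (TensorProduct.assoc F H A A).symm.toLinearMap
        ∘ₗ (TensorProduct.assoc F A H (A ⊗[F] A)).toLinearMap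
        ∘ₗ lTensor (A ⊗[F] H) (rTensor A QA.lam ∘ₗ QA.delta)
      = (TensorProduct.rid F (A ⊗[F] H)).toLinearMap ∘ₗ lTensor (A ⊗[F] H) QA.eps)
  ∧ (rTensor H QA.mu ∘ₗ (TensorProduct.assoc F A A H).symm.toLinearMap
        ∘ₗ TensorProduct.map QA.mu Ψ
        ∘ₗ (TensorProduct.assoc F A A (H ⊗[F] A)).symm.toLinearMap
        ∘ₗ lTensor A (TensorProduct.assoc F A H A).toLinearMap
        ∘ₗ lTensor A (rTensor A Ψ)
        ∘ₗ lTensor A (TensorProduct.assoc F H A A).symm.toLinearMap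
        ∘ₗ (TensorProduct.assoc F A H (A ⊗[F] A)).toLinearMap
        ∘ₗ lTensor (A ⊗[F] H) (lTensor A QA.lam ∘ₗ QA.delta)
      = (TensorProduct.rid F (A ⊗[F] H)).toLinearMap ∘ₗ lTensor (A ⊗[F] H) QA.eps)

/-- The wreath product multiplication `(μ_A⊗μ_H)∘(A⊗Ψ⊗H)` on `A⊗H`. -/
def wreathMul (QA : HopfQG F A) (QH : HopfQG F H) (Ψ : H ⊗[F] A →ₗ[F] A ⊗[F] H) :
    (A ⊗[F] H) ⊗[F] (A ⊗[F] H) →ₗ[F] A ⊗[F] H :=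
  TensorProduct.map QA.mu QH.mu ∘ₗ (TensorProduct.assoc F A A (H ⊗[F] H)).symm.toLinearMap
    ∘ₗ lTensor A ((TensorProduct.assoc F A H H).toLinearMap ∘ₗ rTensor H Ψ
        ∘ₗ (TensorProduct.assoc F H A H).symm.toLinearMap)
    ∘ₗ (TensorProduct.assoc F A H (A ⊗[F] H)).toLinearMap

/-- The wreath product antipode `Ψ∘(λ_H⊗λ_A)∘c_{A,H}`. -/
def wreathLam (QA : HopfQG F A) (QH : HopfQG F H) (Ψ : H ⊗[F] A →ₗ[F] A ⊗[F] H) :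
    A ⊗[F] H →ₗ[F] A ⊗[F] H :=
  Ψ ∘ₗ TensorProduct.map QH.lam QA.lam ∘ₗ (TensorProduct.comm F A H).toLinearMap

/-- `f` is a morphism of Hopf quasigroups. -/
def IsHopfQGMor (Q1 : HopfQG F H) (Q2 : HopfQG F X) (f : H →ₗ[F] X) : Prop :=
  f ∘ₗ Q1.eta = Q2.eta
  ∧ f ∘ₗ Q1.mu = Q2.mu ∘ₗ TensorProduct.map f f
  ∧ Q2.eps ∘ₗ f = Q1.eps
  ∧ TensorProduct.map f f ∘ₗ Q1.delta = Q2.delta ∘ₗ f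

/-- `ω_X = μ_X∘(i_A⊗i_H)`. -/
def omegaMap (QX : HopfQG F X) (iA : A →ₗ[F] X) (iH : H →ₗ[F] X) : A ⊗[F] H →ₗ[F] X :=
  QX.mu ∘ₗ TensorProduct.map iA iH

/-- `θ_X = μ_X∘(i_H⊗i_A)`. -/
def thetaMap (QX : HopfQG F X) (iH : H →ₗ[F] X) (iA : A →ₗ[F] X) : H ⊗[F] A →ₗ[F] X :=
  QX.mu ∘ₗ TensorProduct.map iH iA

/-- `X` factorizes as `X = AH`. -/
def Factorizes (QX : HopfQG F X) (QH : HopfQG F H) (QA : HopfQG F A)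
    (iH : H →ₗ[F] X) (iA : A →ₗ[F] X) : Prop :=
  Function.Bijective (omegaMap F QX iA iH)
  ∧ (QX.mu ∘ₗ rTensor X (omegaMap F QX iA iH)
      = QX.mu ∘ₗ TensorProduct.map iA (QX.mu ∘ₗ rTensor X iH)
          ∘ₗ (TensorProduct.assoc F A H X).toLinearMap)
  ∧ (QX.mu ∘ₗ lTensor X (omegaMap F QX iA iH)
      = QX.mu ∘ₗ TensorProduct.map (QX.mu ∘ₗ lTensor X iA) iH
          ∘ₗ (TensorProduct.assoc F X A H).symm.toLinearMap)
  ∧ (QX.mu ∘ₗ rTensor X (thetaMap F QX iH iA ∘ₗ TensorProduct.map QH.lam QA.lam)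
      = QX.mu ∘ₗ TensorProduct.map (iH ∘ₗ QH.lam) (QX.mu ∘ₗ rTensor X (iA ∘ₗ QA.lam))
          ∘ₗ (TensorProduct.assoc F H A X).toLinearMap)
  ∧ (QX.mu ∘ₗ lTensor X (thetaMap F QX iH iA ∘ₗ TensorProduct.map QH.lam QA.lam)
      = QX.mu ∘ₗ TensorProduct.map (QX.mu ∘ₗ lTensor X (iH ∘ₗ QH.lam)) (iA ∘ₗ QA.lam)
          ∘ₗ (TensorProduct.assoc F X H A).symm.toLinearMap)

end QGDefs

/-- A Hopf coquasigroup structure on an `F`-module `D`. -/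
structure HopfCoQG (F : Type u) [Field F] (D : Type u) [AddCommGroup D] [Module F D] where
  eta : F →ₗ[F] D
  mu : D ⊗[F] D →ₗ[F] D
  eps : D →ₗ[F] F
  delta : D →ₗ[F] D ⊗[F] D
  lam : D →ₗ[F] D
  mul_one : mu ∘ₗ lTensor D eta ∘ₗ (TensorProduct.rid F D).symm.toLinearMap = LinearMap.id
  one_mul : mu ∘ₗ rTensor D eta ∘ₗ (TensorProduct.lid F D).symm.toLinearMap = LinearMap.id
  mul_assoc : mu ∘ₗ rTensor D mu
      = mu ∘ₗ lTensor D mu ∘ₗ (TensorProduct.assoc F D D D).toLinearMap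
  counit_left : (TensorProduct.lid F D).toLinearMap ∘ₗ rTensor D eps ∘ₗ delta = LinearMap.id
  counit_right : (TensorProduct.rid F D).toLinearMap ∘ₗ lTensor D eps ∘ₗ delta = LinearMap.id
  eps_eta : eps ∘ₗ eta = LinearMap.id
  eps_mu : eps ∘ₗ mu = (TensorProduct.lid F F).toLinearMap ∘ₗ TensorProduct.map eps eps
  delta_eta : delta ∘ₗ eta
      = TensorProduct.map eta eta ∘ₗ (TensorProduct.lid F F).symm.toLinearMap
  delta_mu : delta ∘ₗ mu
      = TensorProduct.map mu mu ∘ₗ (TensorProduct.tensorTensorTensorComm F D D D D).toLinearMap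
          ∘ₗ TensorProduct.map delta delta
  antipode_l1 : lTensor D mu ∘ₗ (TensorProduct.assoc F D D D).toLinearMap
        ∘ₗ TensorProduct.map delta lam ∘ₗ delta
      = lTensor D eta ∘ₗ (TensorProduct.rid F D).symm.toLinearMap
  antipode_l2 : lTensor D mu ∘ₗ lTensor D (rTensor D lam)
        ∘ₗ (TensorProduct.assoc F D D D).toLinearMap ∘ₗ rTensor D delta ∘ₗ delta
      = lTensor D eta ∘ₗ (TensorProduct.rid F D).symm.toLinearMap
  antipode_r1 : rTensor D mu ∘ₗ (TensorProduct.assoc F D D D).symm.toLinearMap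
        ∘ₗ TensorProduct.map lam delta ∘ₗ delta
      = rTensor D eta ∘ₗ (TensorProduct.lid F D).symm.toLinearMap
  antipode_r2 : rTensor D mu ∘ₗ (TensorProduct.assoc F D D D).symm.toLinearMap
        ∘ₗ lTensor D (rTensor D lam) ∘ₗ lTensor D delta ∘ₗ delta
      = rTensor D eta ∘ₗ (TensorProduct.lid F D).symm.toLinearMap

section CoQGDefs

variable (F : Type u) [Field F]
variable {D : Type u} [AddCommGroup D] [Module F D]
variable {B : Type u} [AddCommGroup B] [Module F B]
variable {Y : Type u} [AddCommGroup Y] [Module F Y]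

/-- `Ω : D⊗B → B⊗D` is a codistributive law of the Hopf coquasigroup `D` over `B`. -/
def IsCoDistLaw (QD : HopfCoQG F D) (QB : HopfCoQG F B) (Ω : D ⊗[F] B →ₗ[F] B ⊗[F] D) : Prop :=
  (lTensor B (TensorProduct.map QB.lam QD.lam) ∘ₗ (TensorProduct.assoc F B B D).toLinearMap
      ∘ₗ rTensor D QB.delta ∘ₗ Ω
    = lTensor B (TensorProduct.map QB.lam QD.lam) ∘ₗ lTensor B Ω
        ∘ₗ (TensorProduct.assoc F B D B).toLinearMap ∘ₗ rTensor B Ω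
        ∘ₗ (TensorProduct.assoc F D B B).symm.toLinearMap ∘ₗ lTensor D QB.delta)
  ∧ (rTensor D (TensorProduct.map QB.lam QD.lam) ∘ₗ (TensorProduct.assoc F B D D).symm.toLinearMap
      ∘ₗ lTensor B QD.delta ∘ₗ Ω
    = rTensor D (TensorProduct.map QB.lam QD.lam) ∘ₗ rTensor D Ω
        ∘ₗ (TensorProduct.assoc F D B D).symm.toLinearMap ∘ₗ lTensor D Ω
        ∘ₗ (TensorProduct.assoc F D D B).toLinearMap ∘ₗ rTensor B QD.delta)
  ∧ ((TensorProduct.lid F D).toLinearMap ∘ₗ rTensor D QB.eps ∘ₗ Ω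
      = (TensorProduct.rid F D).toLinearMap ∘ₗ lTensor D QB.eps)
  ∧ ((TensorProduct.rid F B).toLinearMap ∘ₗ lTensor B QD.eps ∘ₗ Ω
      = (TensorProduct.lid F B).toLinearMap ∘ₗ rTensor B QD.eps)

/-- `Ω` is a monoidal codistributive law of `D` over `B`. -/
def IsMonoidalCoDL (QD : HopfCoQG F D) (QB : HopfCoQG F B) (Ω : D ⊗[F] B →ₗ[F] B ⊗[F] D) :
    Prop :=
  IsCoDistLaw F QD QB Ω
  ∧ (Ω ∘ₗ tensorMu F QD.mu QB.mu = tensorMu F QB.mu QD.mu ∘ₗ TensorProduct.map Ω Ω)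
  ∧ (Ω ∘ₗ tensorEta F QD.eta QB.eta = tensorEta F QB.eta QD.eta)

/-- `Ω` is an a-monoidal codistributive law of `D` over `B`. -/
def IsAMonoidalCoDL (QD : HopfCoQG F D) (QB : HopfCoQG F B) (Ω : D ⊗[F] B →ₗ[F] B ⊗[F] D) :
    Prop :=
  IsMonoidalCoDL F QD QB Ω
  ∧ (lTensor D (lTensor B (QD.mu ∘ₗ lTensor D QD.lam))
        ∘ₗ lTensor D (TensorProduct.assoc F B D D).toLinearMap
        ∘ₗ lTensor D (rTensor D Ω)
        ∘ₗ lTensor D (TensorProduct.assoc F D B D).symm.toLinearMap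
        ∘ₗ (TensorProduct.assoc F D D (B ⊗[F] D)).toLinearMap
        ∘ₗ TensorProduct.map QD.delta Ω
        ∘ₗ (TensorProduct.assoc F D D B).toLinearMap
        ∘ₗ rTensor B QD.delta
      = lTensor D (lTensor B QD.eta ∘ₗ (TensorProduct.rid F B).symm.toLinearMap))
  ∧ (lTensor D (lTensor B (QD.mu ∘ₗ rTensor D QD.lam))
        ∘ₗ lTensor D (TensorProduct.assoc F B D D).toLinearMap
        ∘ₗ lTensor D (rTensor D Ω)
        ∘ₗ lTensor D (TensorProduct.assoc F D B D).symm.toLinearMap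
        ∘ₗ (TensorProduct.assoc F D D (B ⊗[F] D)).toLinearMap
        ∘ₗ TensorProduct.map QD.delta Ω
        ∘ₗ (TensorProduct.assoc F D D B).toLinearMap
        ∘ₗ rTensor B QD.delta
      = lTensor D (lTensor B QD.eta ∘ₗ (TensorProduct.rid F B).symm.toLinearMap))
  ∧ (rTensor (D ⊗[F] B) (QB.mu ∘ₗ lTensor B QB.lam)
        ∘ₗ (TensorProduct.assoc F B B (D ⊗[F] B)).symm.toLinearMap
        ∘ₗ lTensor B (TensorProduct.assoc F B D B).toLinearMap
        ∘ₗ lTensor B (rTensor B Ω)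
        ∘ₗ lTensor B (TensorProduct.assoc F D B B).symm.toLinearMap
        ∘ₗ (TensorProduct.assoc F B D (B ⊗[F] B)).toLinearMap
        ∘ₗ TensorProduct.map Ω QB.delta
        ∘ₗ (TensorProduct.assoc F D B B).symm.toLinearMap
        ∘ₗ lTensor D QB.delta
      = rTensor (D ⊗[F] B) QB.eta ∘ₗ (TensorProduct.lid F (D ⊗[F] B)).symm.toLinearMap)
  ∧ (rTensor (D ⊗[F] B) (QB.mu ∘ₗ rTensor B QB.lam)
        ∘ₗ (TensorProduct.assoc F B B (D ⊗[F] B)).symm.toLinearMap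
        ∘ₗ lTensor B (TensorProduct.assoc F B D B).toLinearMap
        ∘ₗ lTensor B (rTensor B Ω)
        ∘ₗ lTensor B (TensorProduct.assoc F D B B).symm.toLinearMap
        ∘ₗ (TensorProduct.assoc F B D (B ⊗[F] B)).toLinearMap
        ∘ₗ TensorProduct.map Ω QB.delta
        ∘ₗ (TensorProduct.assoc F D B B).symm.toLinearMap
        ∘ₗ lTensor D QB.delta
      = rTensor (D ⊗[F] B) QB.eta ∘ₗ (TensorProduct.lid F (D ⊗[F] B)).symm.toLinearMap)

/-- The wreath coproduct `(D⊗Ω⊗B)∘(δ_D⊗δ_B)` on `D⊗B`. -/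
def wreathDelta (QD : HopfCoQG F D) (QB : HopfCoQG F B) (Ω : D ⊗[F] B →ₗ[F] B ⊗[F] D) :
    D ⊗[F] B →ₗ[F] (D ⊗[F] B) ⊗[F] (D ⊗[F] B) :=
  (TensorProduct.assoc F D B (D ⊗[F] B)).symm.toLinearMap
    ∘ₗ lTensor D ((TensorProduct.assoc F B D B).toLinearMap ∘ₗ rTensor B Ω
        ∘ₗ (TensorProduct.assoc F D B B).symm.toLinearMap)
    ∘ₗ (TensorProduct.assoc F D D (B ⊗[F] B)).toLinearMap
    ∘ₗ TensorProduct.map QD.delta QB.delta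

/-- The wreath coproduct antipode `c_{B,D}∘(λ_B⊗λ_D)∘Ω`. -/
def wreathCoLam (QD : HopfCoQG F D) (QB : HopfCoQG F B) (Ω : D ⊗[F] B →ₗ[F] B ⊗[F] D) :
    D ⊗[F] B →ₗ[F] D ⊗[F] B :=
  (TensorProduct.comm F B D).toLinearMap ∘ₗ TensorProduct.map QB.lam QD.lam ∘ₗ Ω

/-- `f` is a morphism of Hopf coquasigroups. -/
def IsHopfCoQGMor (Q1 : HopfCoQG F D) (Q2 : HopfCoQG F B) (f : D →ₗ[F] B) : Prop :=
  f ∘ₗ Q1.eta = Q2.eta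
  ∧ f ∘ₗ Q1.mu = Q2.mu ∘ₗ TensorProduct.map f f
  ∧ Q2.eps ∘ₗ f = Q1.eps
  ∧ TensorProduct.map f f ∘ₗ Q1.delta = Q2.delta ∘ₗ f

/-- `u_Y = (p_D⊗p_B)∘δ_Y`. -/
def uMap (QY : HopfCoQG F Y) (pD : Y →ₗ[F] D) (pB : Y →ₗ[F] B) : Y →ₗ[F] D ⊗[F] B :=
  TensorProduct.map pD pB ∘ₗ QY.delta

/-- `v_Y = (p_B⊗p_D)∘δ_Y`. -/
def vMap (QY : HopfCoQG F Y) (pB : Y →ₗ[F] B) (pD : Y →ₗ[F] D) : Y →ₗ[F] B ⊗[F] D :=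
  TensorProduct.map pB pD ∘ₗ QY.delta

/-- `Y` cofactorizes as `Y = D•B`. -/
def Cofactorizes (QY : HopfCoQG F Y) (QD : HopfCoQG F D) (QB : HopfCoQG F B)
    (pD : Y →ₗ[F] D) (pB : Y →ₗ[F] B) : Prop :=
  Function.Bijective (uMap F QY pD pB)
  ∧ (lTensor Y (uMap F QY pD pB) ∘ₗ QY.delta
      = (TensorProduct.assoc F Y D B).toLinearMap
          ∘ₗ TensorProduct.map (lTensor Y pD ∘ₗ QY.delta) pB ∘ₗ QY.delta)
  ∧ (rTensor Y (uMap F QY pD pB) ∘ₗ QY.delta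
      = (TensorProduct.assoc F D B Y).symm.toLinearMap
          ∘ₗ TensorProduct.map pD (rTensor Y pB ∘ₗ QY.delta) ∘ₗ QY.delta)
  ∧ (lTensor Y (TensorProduct.map QB.lam QD.lam ∘ₗ vMap F QY pB pD) ∘ₗ QY.delta
      = (TensorProduct.assoc F Y B D).toLinearMap
          ∘ₗ TensorProduct.map (lTensor Y (QB.lam ∘ₗ pB) ∘ₗ QY.delta) (QD.lam ∘ₗ pD)
          ∘ₗ QY.delta)
  ∧ (rTensor Y (TensorProduct.map QB.lam QD.lam ∘ₗ vMap F QY pB pD) ∘ₗ QY.delta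
      = (TensorProduct.assoc F B D Y).symm.toLinearMap
          ∘ₗ TensorProduct.map (QB.lam ∘ₗ pB) (rTensor Y (QD.lam ∘ₗ pD) ∘ₗ QY.delta)
          ∘ₗ QY.delta)

end CoQGDefs

section Aux2

variable {F : Type u} [Field F]
variable {M N P Q R : Type u} [AddCommGroup M] [AddCommGroup N] [AddCommGroup P]
  [AddCommGroup Q] [AddCommGroup R]
  [Module F M] [Module F N] [Module F P] [Module F Q] [Module F R]

lemma eqv_cancel₁ (e : M ≃ₗ[F] N) (f : P →ₗ[F] N) :
    e.toLinearMap ∘ₗ e.symm.toLinearMap ∘ₗ f = f := by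
  ext p; simp

lemma eqv_cancel₂ (e : M ≃ₗ[F] N) (f : P →ₗ[F] M) :
    e.symm.toLinearMap ∘ₗ e.toLinearMap ∘ₗ f = f := by
  ext p; simp

lemma lT_merge (f : N →ₗ[F] P) (g : M →ₗ[F] N) (h : Q →ₗ[F] R ⊗[F] M) :
    lTensor R f ∘ₗ lTensor R g ∘ₗ h = lTensor R (f ∘ₗ g) ∘ₗ h := by
  rw [← LinearMap.comp_assoc, ← lTensor_comp]

lemma rT_merge (f : N →ₗ[F] P) (g : M →ₗ[F] N) (h : Q →ₗ[F] M ⊗[F] R) :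
    rTensor R f ∘ₗ rTensor R g ∘ₗ h = rTensor R (f ∘ₗ g) ∘ₗ h := by
  rw [← LinearMap.comp_assoc, ← rTensor_comp]

end Aux2

section Aux3

variable {F : Type u} [Field F]
variable {D : Type u} [AddCommGroup D] [Module F D]
variable {B : Type u} [AddCommGroup B] [Module F B]

/-- `μ ∘ (id ⊗ λ) ∘ δ = η ∘ ε` in a Hopf coquasigroup. -/
lemma hopf_lam_l (Q : HopfCoQG F D) :
    (Q.mu ∘ₗ lTensor D Q.lam) ∘ₗ Q.delta = Q.eta ∘ₗ Q.eps := by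
  have key : ∀ t : D ⊗[F] D,
      (TensorProduct.lid F D) (rTensor D Q.eps (lTensor D Q.mu
          ((TensorProduct.assoc F D D D) (TensorProduct.map Q.delta Q.lam t))))
        = Q.mu (lTensor D Q.lam (rTensor D
            ((TensorProduct.lid F D).toLinearMap ∘ₗ rTensor D Q.eps ∘ₗ Q.delta) t)) := by
    intro t
    induction t using TensorProduct.induction_on with
    | zero => simp
    | tmul a b =>
      simp only [map_tmul, rTensor_tmul, coe_comp, Function.comp_apply, LinearEquiv.coe_coe]
      generalize Q.delta a = s
      induction s using TensorProduct.induction_on with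
      | zero => simp
      | tmul a1 a2 =>
        simp only [assoc_tmul, lTensor_tmul, rTensor_tmul, TensorProduct.lid_tmul,
          map_smul, smul_tmul', TensorProduct.smul_tmul]
        simp [← smul_tmul', tmul_smul, map_smul]
      | add u v hu hv => simp only [add_tmul, map_add, hu, hv]
    | add u v hu hv => simp only [map_add, hu, hv]
  apply LinearMap.ext
  intro x
  have h := LinearMap.congr_fun Q.antipode_l1 x
  simp only [coe_comp, Function.comp_apply, LinearEquiv.coe_coe] at h
  have h2 := congrArg (fun z => (TensorProduct.lid F D) (rTensor D Q.eps z)) h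
  rw [key (Q.delta x)] at h2
  rw [Q.counit_left] at h2
  simp only [rTensor_id, id_coe, id_eq, lTensor_tmul, rTensor_tmul,
    TensorProduct.rid_symm_apply, TensorProduct.lid_tmul, map_smul] at h2
  simp only [coe_comp, Function.comp_apply]
  rw [h2]
  simp [← map_smul]

/-- `μ ∘ (λ ⊗ id) ∘ δ = η ∘ ε` in a Hopf coquasigroup. -/
lemma hopf_lam_r (Q : HopfCoQG F D) :
    (Q.mu ∘ₗ rTensor D Q.lam) ∘ₗ Q.delta = Q.eta ∘ₗ Q.eps := by
  have key : ∀ t : D ⊗[F] D,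
      (TensorProduct.rid F D) (lTensor D Q.eps (rTensor D Q.mu
          ((TensorProduct.assoc F D D D).symm (TensorProduct.map Q.lam Q.delta t))))
        = Q.mu (rTensor D Q.lam (lTensor D
            ((TensorProduct.rid F D).toLinearMap ∘ₗ lTensor D Q.eps ∘ₗ Q.delta) t)) := by
    intro t
    induction t using TensorProduct.induction_on with
    | zero => simp
    | tmul a b =>
      simp only [map_tmul, lTensor_tmul, coe_comp, Function.comp_apply, LinearEquiv.coe_coe]
      generalize Q.delta b = s
      induction s using TensorProduct.induction_on with
      | zero => simp
      | tmul b1 b2 =>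
        simp only [assoc_symm_tmul, rTensor_tmul, lTensor_tmul, TensorProduct.rid_tmul,
          map_smul]
        simp [← smul_tmul', tmul_smul, map_smul]
      | add u v hu hv => simp only [tmul_add, map_add, hu, hv]
    | add u v hu hv => simp only [map_add, hu, hv]
  apply LinearMap.ext
  intro x
  have h := LinearMap.congr_fun Q.antipode_r1 x
  simp only [coe_comp, Function.comp_apply, LinearEquiv.coe_coe] at h
  have h2 := congrArg (fun z => (TensorProduct.rid F D) (lTensor D Q.eps z)) h
  rw [key (Q.delta x)] at h2
  rw [Q.counit_right] at h2
  simp only [lTensor_id, id_coe, id_eq, rTensor_tmul, lTensor_tmul,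
    TensorProduct.lid_symm_apply, TensorProduct.rid_tmul, map_smul] at h2
  simp only [coe_comp, Function.comp_apply]
  rw [h2]
  simp [← map_smul]

lemma natU (d : D →ₗ[F] D ⊗[F] D) (W : D ⊗[F] B →ₗ[F] B ⊗[F] D) (g : D ⊗[F] D →ₗ[F] D) :
    lTensor D (lTensor B g)
        ∘ₗ lTensor D (TensorProduct.assoc F B D D).toLinearMap
        ∘ₗ lTensor D (rTensor D W)
        ∘ₗ lTensor D (TensorProduct.assoc F D B D).symm.toLinearMap
        ∘ₗ (TensorProduct.assoc F D D (B ⊗[F] D)).toLinearMap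
        ∘ₗ TensorProduct.map d W
        ∘ₗ (TensorProduct.assoc F D D B).toLinearMap
        ∘ₗ rTensor B d
      = lTensor D (lTensor B g ∘ₗ (TensorProduct.assoc F B D D).toLinearMap
            ∘ₗ rTensor D W ∘ₗ (TensorProduct.assoc F D B D).symm.toLinearMap
            ∘ₗ lTensor D W ∘ₗ (TensorProduct.assoc F D D B).toLinearMap)
        ∘ₗ (TensorProduct.assoc F D (D ⊗[F] D) B).toLinearMap
        ∘ₗ rTensor B ((TensorProduct.assoc F D D D).toLinearMap ∘ₗ rTensor D d ∘ₗ d) := by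
  apply TensorProduct.ext'
  intro x y
  simp only [coe_comp, Function.comp_apply, rTensor_tmul, LinearEquiv.coe_coe]
  generalize d x = t
  induction t using TensorProduct.induction_on with
  | zero => simp
  | add u v hu hv => simp only [map_add, add_tmul, tmul_add, hu, hv]
  | tmul a b =>
    simp only [assoc_tmul, map_tmul, rTensor_tmul, lTensor_tmul, coe_comp,
      Function.comp_apply, LinearEquiv.coe_coe]
    generalize d a = u
    induction u using TensorProduct.induction_on with
    | zero => simp
    | add u v hu hv => simp only [map_add, add_tmul, tmul_add, hu, hv]
    | tmul a1 a2 =>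
      simp only [assoc_tmul, rTensor_tmul, lTensor_tmul, coe_comp,
        Function.comp_apply, LinearEquiv.coe_coe]

lemma natV (k : (D ⊗[F] D) ⊗[F] B →ₗ[F] B ⊗[F] D) (d : D →ₗ[F] D ⊗[F] D) :
    lTensor D k ∘ₗ (TensorProduct.assoc F D (D ⊗[F] D) B).toLinearMap
        ∘ₗ rTensor B (lTensor D d ∘ₗ d)
      = lTensor D (k ∘ₗ rTensor B d) ∘ₗ (TensorProduct.assoc F D D B).toLinearMap
        ∘ₗ rTensor B d := by
  apply TensorProduct.ext'
  intro x y
  simp only [coe_comp, Function.comp_apply, rTensor_tmul, LinearEquiv.coe_coe]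
  generalize d x = t
  induction t using TensorProduct.induction_on with
  | zero => simp
  | tmul a b => simp
  | add u v hu hv => simp only [add_tmul, map_add, hu, hv]

lemma finalD (QD : HopfCoQG F D) (Ω : D ⊗[F] B →ₗ[F] B ⊗[F] D)
    (h4 : (TensorProduct.rid F B).toLinearMap ∘ₗ lTensor B QD.eps ∘ₗ Ω
        = (TensorProduct.lid F B).toLinearMap ∘ₗ rTensor B QD.eps) :
    lTensor D (lTensor B (QD.eta ∘ₗ QD.eps) ∘ₗ Ω)
        ∘ₗ (TensorProduct.assoc F D D B).toLinearMap ∘ₗ rTensor B QD.delta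
      = lTensor D (lTensor B QD.eta ∘ₗ (TensorProduct.rid F B).symm.toLinearMap) := by
  have h4' : ∀ z : D ⊗[F] B, lTensor B QD.eps (Ω z)
      = (TensorProduct.rid F B).symm ((TensorProduct.lid F B) (rTensor B QD.eps z)) := by
    intro z
    have := LinearMap.congr_fun h4 z
    simp only [coe_comp, Function.comp_apply, LinearEquiv.coe_coe] at this
    rw [← this, LinearEquiv.symm_apply_apply]
  apply TensorProduct.ext'
  intro x y
  have key : ∀ t : D ⊗[F] D,
      lTensor D (lTensor B (QD.eta ∘ₗ QD.eps) ∘ₗ Ω)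
          ((TensorProduct.assoc F D D B) (t ⊗ₜ[F] y))
        = (TensorProduct.rid F D) (lTensor D QD.eps t) ⊗ₜ[F] (y ⊗ₜ[F] QD.eta 1) := by
    intro t
    induction t using TensorProduct.induction_on with
    | zero => simp
    | tmul a b =>
      simp only [assoc_tmul, lTensor_tmul, coe_comp, Function.comp_apply, rid_tmul,
        TensorProduct.lid_tmul, lTensor_comp_apply, rTensor_tmul,
        TensorProduct.rid_symm_apply, map_smul, LinearEquiv.coe_coe]
      rw [h4']
      simp only [rTensor_tmul, TensorProduct.lid_tmul, LinearEquiv.coe_coe, map_smul,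
        TensorProduct.rid_symm_apply, lTensor_tmul]
      simp [← smul_tmul', tmul_smul]
    | add u v hu hv => simp only [add_tmul, map_add, hu, hv, add_tmul]
  have hc := LinearMap.congr_fun QD.counit_right x
  simp only [coe_comp, Function.comp_apply, LinearEquiv.coe_coe, id_coe, id_eq] at hc
  simp only [coe_comp, Function.comp_apply, rTensor_tmul, LinearEquiv.coe_coe, lTensor_tmul,
    TensorProduct.rid_symm_apply]
  rw [key, hc]

lemma mainD (QD : HopfCoQG F D) (Ω : D ⊗[F] B →ₗ[F] B ⊗[F] D)
    (hcoD : (TensorProduct.assoc F D D D).toLinearMap ∘ₗ rTensor D QD.delta ∘ₗ QD.delta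
        = lTensor D QD.delta ∘ₗ QD.delta)
    (h2 : (TensorProduct.assoc F B D D).symm.toLinearMap ∘ₗ lTensor B QD.delta ∘ₗ Ω
        = rTensor D Ω ∘ₗ (TensorProduct.assoc F D B D).symm.toLinearMap ∘ₗ lTensor D Ω
            ∘ₗ (TensorProduct.assoc F D D B).toLinearMap ∘ₗ rTensor B QD.delta)
    (h4 : (TensorProduct.rid F B).toLinearMap ∘ₗ lTensor B QD.eps ∘ₗ Ω
        = (TensorProduct.lid F B).toLinearMap ∘ₗ rTensor B QD.eps)
    (g : D ⊗[F] D →ₗ[F] D) (hg : g ∘ₗ QD.delta = QD.eta ∘ₗ QD.eps) :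
    lTensor D (lTensor B g)
        ∘ₗ lTensor D (TensorProduct.assoc F B D D).toLinearMap
        ∘ₗ lTensor D (rTensor D Ω)
        ∘ₗ lTensor D (TensorProduct.assoc F D B D).symm.toLinearMap
        ∘ₗ (TensorProduct.assoc F D D (B ⊗[F] D)).toLinearMap
        ∘ₗ TensorProduct.map QD.delta Ω
        ∘ₗ (TensorProduct.assoc F D D B).toLinearMap
        ∘ₗ rTensor B QD.delta
      = lTensor D (lTensor B QD.eta ∘ₗ (TensorProduct.rid F B).symm.toLinearMap) := by
  rw [natU QD.delta Ω g, hcoD, natV]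
  simp only [LinearMap.comp_assoc]
  rw [← h2, eqv_cancel₁, lT_merge, hg, finalD QD Ω h4]

lemma natU' (d : B →ₗ[F] B ⊗[F] B) (W : D ⊗[F] B →ₗ[F] B ⊗[F] D) (g : B ⊗[F] B →ₗ[F] B) :
    rTensor (D ⊗[F] B) g
        ∘ₗ (TensorProduct.assoc F B B (D ⊗[F] B)).symm.toLinearMap
        ∘ₗ lTensor B (TensorProduct.assoc F B D B).toLinearMap
        ∘ₗ lTensor B (rTensor B W)
        ∘ₗ lTensor B (TensorProduct.assoc F D B B).symm.toLinearMap
        ∘ₗ (TensorProduct.assoc F B D (B ⊗[F] B)).toLinearMap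
        ∘ₗ TensorProduct.map W d
        ∘ₗ (TensorProduct.assoc F D B B).symm.toLinearMap
        ∘ₗ lTensor D d
      = (TensorProduct.assoc F B D B).toLinearMap
        ∘ₗ rTensor B (rTensor D g ∘ₗ (TensorProduct.assoc F B B D).symm.toLinearMap
            ∘ₗ lTensor B W ∘ₗ (TensorProduct.assoc F B D B).toLinearMap
            ∘ₗ rTensor B W ∘ₗ (TensorProduct.assoc F D B B).symm.toLinearMap)
        ∘ₗ (TensorProduct.assoc F D (B ⊗[F] B) B).symm.toLinearMap
        ∘ₗ lTensor D ((TensorProduct.assoc F B B B).symm.toLinearMap ∘ₗ lTensor B d ∘ₗ d) := by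
  apply TensorProduct.ext'
  intro x y
  simp only [coe_comp, Function.comp_apply, lTensor_tmul, LinearEquiv.coe_coe]
  generalize d y = t
  induction t using TensorProduct.induction_on with
  | zero => simp
  | add u v hu hv => simp only [map_add, add_tmul, tmul_add, hu, hv]
  | tmul a b =>
    simp only [assoc_symm_tmul, map_tmul, rTensor_tmul, lTensor_tmul, coe_comp,
      Function.comp_apply, LinearEquiv.coe_coe]
    generalize d b = u
    induction u using TensorProduct.induction_on with
    | zero => simp
    | add u v hu hv => simp only [map_add, add_tmul, tmul_add, hu, hv]
    | tmul b1 b2 =>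
      simp only [assoc_tmul, assoc_symm_tmul, map_tmul, rTensor_tmul, lTensor_tmul, coe_comp,
        Function.comp_apply, LinearEquiv.coe_coe]
      generalize W (x ⊗ₜ[F] a) = w
      induction w using TensorProduct.induction_on with
      | zero => simp
      | add u v hu hv => simp only [map_add, add_tmul, tmul_add, hu, hv]
      | tmul c1 e1 =>
        simp only [assoc_tmul, assoc_symm_tmul, rTensor_tmul, lTensor_tmul, coe_comp,
          Function.comp_apply, LinearEquiv.coe_coe]
        generalize W (e1 ⊗ₜ[F] b1) = v
        induction v using TensorProduct.induction_on with
        | zero => simp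
        | add u v hu hv => simp only [map_add, add_tmul, tmul_add, hu, hv]
        | tmul c2 e2 =>
          simp only [assoc_tmul, assoc_symm_tmul, rTensor_tmul, lTensor_tmul, coe_comp,
            Function.comp_apply, LinearEquiv.coe_coe]

lemma natV' (k : D ⊗[F] (B ⊗[F] B) →ₗ[F] B ⊗[F] D) (d : B →ₗ[F] B ⊗[F] B) :
    rTensor B k ∘ₗ (TensorProduct.assoc F D (B ⊗[F] B) B).symm.toLinearMap
        ∘ₗ lTensor D (rTensor B d ∘ₗ d)
      = rTensor B (k ∘ₗ lTensor D d) ∘ₗ (TensorProduct.assoc F D B B).symm.toLinearMap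
        ∘ₗ lTensor D d := by
  apply TensorProduct.ext'
  intro x y
  simp only [coe_comp, Function.comp_apply, lTensor_tmul, LinearEquiv.coe_coe]
  generalize d y = t
  induction t using TensorProduct.induction_on with
  | zero => simp
  | tmul a b => simp
  | add u v hu hv => simp only [tmul_add, map_add, hu, hv]

lemma finalB (QB : HopfCoQG F B) (Ω : D ⊗[F] B →ₗ[F] B ⊗[F] D)
    (h3 : (TensorProduct.lid F D).toLinearMap ∘ₗ rTensor D QB.eps ∘ₗ Ω
        = (TensorProduct.rid F D).toLinearMap ∘ₗ lTensor D QB.eps) :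
    (TensorProduct.assoc F B D B).toLinearMap
        ∘ₗ rTensor B (rTensor D (QB.eta ∘ₗ QB.eps) ∘ₗ Ω)
        ∘ₗ (TensorProduct.assoc F D B B).symm.toLinearMap ∘ₗ lTensor D QB.delta
      = rTensor (D ⊗[F] B) QB.eta ∘ₗ (TensorProduct.lid F (D ⊗[F] B)).symm.toLinearMap := by
  have h3' : ∀ z : D ⊗[F] B, rTensor D QB.eps (Ω z)
      = (TensorProduct.lid F D).symm ((TensorProduct.rid F D) (lTensor D QB.eps z)) := by
    intro z
    have := LinearMap.congr_fun h3 z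
    simp only [coe_comp, Function.comp_apply, LinearEquiv.coe_coe] at this
    rw [← this, LinearEquiv.symm_apply_apply]
  apply TensorProduct.ext'
  intro x y
  have key : ∀ t : B ⊗[F] B,
      (TensorProduct.assoc F B D B) ((rTensor B (rTensor D (QB.eta ∘ₗ QB.eps) ∘ₗ Ω))
          ((TensorProduct.assoc F D B B).symm (x ⊗ₜ[F] t)))
        = QB.eta 1 ⊗ₜ[F] (x ⊗ₜ[F] (TensorProduct.lid F B) (rTensor B QB.eps t)) := by
    intro t
    induction t using TensorProduct.induction_on with
    | zero => simp
    | tmul a b =>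
      simp only [assoc_symm_tmul, rTensor_tmul, coe_comp, Function.comp_apply,
        LinearEquiv.coe_coe, rTensor_comp_apply]
      rw [h3']
      simp only [lTensor_tmul, TensorProduct.rid_tmul, LinearEquiv.coe_coe, map_smul,
        TensorProduct.lid_symm_apply, rTensor_tmul, assoc_tmul, TensorProduct.lid_tmul]
      simp [← smul_tmul', tmul_smul, smul_tmul]
    | add u v hu hv => simp only [tmul_add, map_add, hu, hv]
  have hc := LinearMap.congr_fun QB.counit_left y
  simp only [coe_comp, Function.comp_apply, LinearEquiv.coe_coe, id_coe, id_eq] at hc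
  simp only [coe_comp, Function.comp_apply, lTensor_tmul, LinearEquiv.coe_coe,
    TensorProduct.lid_symm_apply, rTensor_tmul]
  rw [key, hc]

lemma mainB (QB : HopfCoQG F B) (Ω : D ⊗[F] B →ₗ[F] B ⊗[F] D)
    (hcoB : (TensorProduct.assoc F B B B).toLinearMap ∘ₗ rTensor B QB.delta ∘ₗ QB.delta
        = lTensor B QB.delta ∘ₗ QB.delta)
    (h1 : (TensorProduct.assoc F B B D).toLinearMap ∘ₗ rTensor D QB.delta ∘ₗ Ω
        = lTensor B Ω ∘ₗ (TensorProduct.assoc F B D B).toLinearMap ∘ₗ rTensor B Ω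
            ∘ₗ (TensorProduct.assoc F D B B).symm.toLinearMap ∘ₗ lTensor D QB.delta)
    (h3 : (TensorProduct.lid F D).toLinearMap ∘ₗ rTensor D QB.eps ∘ₗ Ω
        = (TensorProduct.rid F D).toLinearMap ∘ₗ lTensor D QB.eps)
    (g : B ⊗[F] B →ₗ[F] B) (hg : g ∘ₗ QB.delta = QB.eta ∘ₗ QB.eps) :
    rTensor (D ⊗[F] B) g
        ∘ₗ (TensorProduct.assoc F B B (D ⊗[F] B)).symm.toLinearMap
        ∘ₗ lTensor B (TensorProduct.assoc F B D B).toLinearMap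
        ∘ₗ lTensor B (rTensor B Ω)
        ∘ₗ lTensor B (TensorProduct.assoc F D B B).symm.toLinearMap
        ∘ₗ (TensorProduct.assoc F B D (B ⊗[F] B)).toLinearMap
        ∘ₗ TensorProduct.map Ω QB.delta
        ∘ₗ (TensorProduct.assoc F D B B).symm.toLinearMap
        ∘ₗ lTensor D QB.delta
      = rTensor (D ⊗[F] B) QB.eta ∘ₗ (TensorProduct.lid F (D ⊗[F] B)).symm.toLinearMap := by
  have hco' : (TensorProduct.assoc F B B B).symm.toLinearMap ∘ₗ lTensor B QB.delta ∘ₗ QB.delta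
      = rTensor B QB.delta ∘ₗ QB.delta := by
    rw [← hcoB]; exact eqv_cancel₂ _ _
  rw [natU' QB.delta Ω g, hco', natV']
  simp only [LinearMap.comp_assoc]
  rw [← h1, eqv_cancel₂, rT_merge, hg, finalB QB Ω h3]

end Aux3

/-- for Hopf algebras `D`, `B` (Hopf coquasigroups with coassociative
coproducts) and a codistributive law `Ω` between the underlying comonoids, the four
a-monoidal identities hold automatically. -/
theorem stmt18_hopf_algebra_codistributive_law_is_a_monoidal
    {F : Type u} [Field F] {D B : Type u}
    [AddCommGroup D] [Module F D] [AddCommGroup B] [Module F B]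
    (QD : HopfCoQG F D) (QB : HopfCoQG F B)
    (hcoD : (TensorProduct.assoc F D D D).toLinearMap ∘ₗ rTensor D QD.delta ∘ₗ QD.delta
        = lTensor D QD.delta ∘ₗ QD.delta)
    (hcoB : (TensorProduct.assoc F B B B).toLinearMap ∘ₗ rTensor B QB.delta ∘ₗ QB.delta
        = lTensor B QB.delta ∘ₗ QB.delta)
    (Ω : D ⊗[F] B →ₗ[F] B ⊗[F] D)
    (h1 : (TensorProduct.assoc F B B D).toLinearMap ∘ₗ rTensor D QB.delta ∘ₗ Ω
        = lTensor B Ω ∘ₗ (TensorProduct.assoc F B D B).toLinearMap ∘ₗ rTensor B Ω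
            ∘ₗ (TensorProduct.assoc F D B B).symm.toLinearMap ∘ₗ lTensor D QB.delta)
    (h2 : (TensorProduct.assoc F B D D).symm.toLinearMap ∘ₗ lTensor B QD.delta ∘ₗ Ω
        = rTensor D Ω ∘ₗ (TensorProduct.assoc F D B D).symm.toLinearMap ∘ₗ lTensor D Ω
            ∘ₗ (TensorProduct.assoc F D D B).toLinearMap ∘ₗ rTensor B QD.delta)
    (h3 : (TensorProduct.lid F D).toLinearMap ∘ₗ rTensor D QB.eps ∘ₗ Ω
        = (TensorProduct.rid F D).toLinearMap ∘ₗ lTensor D QB.eps)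
    (h4 : (TensorProduct.rid F B).toLinearMap ∘ₗ lTensor B QD.eps ∘ₗ Ω
        = (TensorProduct.lid F B).toLinearMap ∘ₗ rTensor B QD.eps) :
    (lTensor D (lTensor B (QD.mu ∘ₗ lTensor D QD.lam))
        ∘ₗ lTensor D (TensorProduct.assoc F B D D).toLinearMap
        ∘ₗ lTensor D (rTensor D Ω)
        ∘ₗ lTensor D (TensorProduct.assoc F D B D).symm.toLinearMap
        ∘ₗ (TensorProduct.assoc F D D (B ⊗[F] D)).toLinearMap
        ∘ₗ TensorProduct.map QD.delta Ω
        ∘ₗ (TensorProduct.assoc F D D B).toLinearMap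
        ∘ₗ rTensor B QD.delta
      = lTensor D (lTensor B QD.eta ∘ₗ (TensorProduct.rid F B).symm.toLinearMap))
    ∧ (lTensor D (lTensor B (QD.mu ∘ₗ rTensor D QD.lam))
        ∘ₗ lTensor D (TensorProduct.assoc F B D D).toLinearMap
        ∘ₗ lTensor D (rTensor D Ω)
        ∘ₗ lTensor D (TensorProduct.assoc F D B D).symm.toLinearMap
        ∘ₗ (TensorProduct.assoc F D D (B ⊗[F] D)).toLinearMap
        ∘ₗ TensorProduct.map QD.delta Ω
        ∘ₗ (TensorProduct.assoc F D D B).toLinearMap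
        ∘ₗ rTensor B QD.delta
      = lTensor D (lTensor B QD.eta ∘ₗ (TensorProduct.rid F B).symm.toLinearMap))
    ∧ (rTensor (D ⊗[F] B) (QB.mu ∘ₗ lTensor B QB.lam)
        ∘ₗ (TensorProduct.assoc F B B (D ⊗[F] B)).symm.toLinearMap
        ∘ₗ lTensor B (TensorProduct.assoc F B D B).toLinearMap
        ∘ₗ lTensor B (rTensor B Ω)
        ∘ₗ lTensor B (TensorProduct.assoc F D B B).symm.toLinearMap
        ∘ₗ (TensorProduct.assoc F B D (B ⊗[F] B)).toLinearMap
        ∘ₗ TensorProduct.map Ω QB.delta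
        ∘ₗ (TensorProduct.assoc F D B B).symm.toLinearMap
        ∘ₗ lTensor D QB.delta
      = rTensor (D ⊗[F] B) QB.eta ∘ₗ (TensorProduct.lid F (D ⊗[F] B)).symm.toLinearMap)
    ∧ (rTensor (D ⊗[F] B) (QB.mu ∘ₗ rTensor B QB.lam)
        ∘ₗ (TensorProduct.assoc F B B (D ⊗[F] B)).symm.toLinearMap
        ∘ₗ lTensor B (TensorProduct.assoc F B D B).toLinearMap
        ∘ₗ lTensor B (rTensor B Ω)
        ∘ₗ lTensor B (TensorProduct.assoc F D B B).symm.toLinearMap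
        ∘ₗ (TensorProduct.assoc F B D (B ⊗[F] B)).toLinearMap
        ∘ₗ TensorProduct.map Ω QB.delta
        ∘ₗ (TensorProduct.assoc F D B B).symm.toLinearMap
        ∘ₗ lTensor D QB.delta
      = rTensor (D ⊗[F] B) QB.eta ∘ₗ (TensorProduct.lid F (D ⊗[F] B)).symm.toLinearMap) := by
  exact ⟨mainD QD Ω hcoD h2 h4 _ (hopf_lam_l QD), mainD QD Ω hcoD h2 h4 _ (hopf_lam_r QD),
    mainB QB Ω hcoB h1 h3 _ (hopf_lam_l QB), mainB QB Ω hcoB h1 h3 _ (hopf_lam_r QB)⟩
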